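/- arXiv:2506.10887 — 2 statements merged into one kernel-verified Lean document; each statement's English description precedes it below -/
import Mathlib

section
/- Let M̄ ∈ R^{m×n}, let U ∈ R^{m×r}, V ∈ R^{n×r} have orthonormal columns, and suppose there exists a vector η ∈ R^m with η^T U = 0 but η^T M̄ ≠ 0. Then the nuclear norm of M̄ is strictly greater than trace(U^T M̄ V). -/
open scoped BigOperators Matrix

/-- Squared Frobenius norm of a real matrix. -/
noncomputable def frobSq {m n : ℕ} (A : Matrix (Fin m) (Fin n) ℝ) : ℝ :=
  ∑ i, ∑ j, (A i j) ^ 2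

/-- The nuclear norm of a real matrix: the sum of its singular values, i.e. the
sum of the square roots of the eigenvalues of `Aᵀ * A`. -/
noncomputable def nuclearNorm {m n : ℕ} (A : Matrix (Fin m) (Fin n) ℝ) : ℝ :=
  ∑ j, Real.sqrt ((Matrix.isHermitian_conjTranspose_mul_self A).eigenvalues j)

open Matrix in
/-- Cauchy–Schwarz for real dot products. -/
lemma dotProduct_le_sqrt_mul_sqrt {k : ℕ} (x y : Fin k → ℝ) :
    x ⬝ᵥ y ≤ Real.sqrt (x ⬝ᵥ x) * Real.sqrt (y ⬝ᵥ y) := by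
  have h := real_inner_le_norm ((WithLp.equiv 2 (Fin k → ℝ)).symm x)
      ((WithLp.equiv 2 (Fin k → ℝ)).symm y)
  simpa [PiLp.inner_apply, RCLike.inner_apply, EuclideanSpace.norm_eq,
    dotProduct, Real.norm_eq_abs, sq_abs, sq, mul_comm] using h

open Matrix in
lemma dotProduct_self_nonneg {k : ℕ} (x : Fin k → ℝ) : 0 ≤ x ⬝ᵥ x :=
  Finset.sum_nonneg fun i _ => mul_self_nonneg _

open Matrix in
/-- `(M x) ⬝ (M y) = x ⬝ (MᵀM y)`. -/
lemma mulVec_dot_mulVec {a b : ℕ} (M : Matrix (Fin a) (Fin b) ℝ) (x y : Fin b → ℝ) :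
    (M *ᵥ x) ⬝ᵥ (M *ᵥ y) = x ⬝ᵥ ((Mᵀ * M) *ᵥ y) := by
  rw [← Matrix.mulVec_mulVec, Matrix.dotProduct_mulVec x Mᵀ, Matrix.vecMul_transpose]

open Matrix in
/-- If the columns of `B` are orthonormal then `‖Bᵀ x‖ ≤ ‖x‖` (squared form). -/
lemma transpose_mulVec_dot_le {a b : ℕ} (B : Matrix (Fin a) (Fin b) ℝ)
    (hB : Bᵀ * B = 1) (x : Fin a → ℝ) :
    (Bᵀ *ᵥ x) ⬝ᵥ (Bᵀ *ᵥ x) ≤ x ⬝ᵥ x := by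
  set z := Bᵀ *ᵥ x with hz
  have hBz : (B *ᵥ z) ⬝ᵥ (B *ᵥ z) = z ⬝ᵥ z := by
    rw [mulVec_dot_mulVec, hB, Matrix.one_mulVec]
  have h1 : z ⬝ᵥ z = x ⬝ᵥ (B *ᵥ z) := by
    rw [hz, Matrix.mulVec_transpose, dotProduct_comm, ← Matrix.dotProduct_mulVec]
  have h2 : z ⬝ᵥ z ≤ Real.sqrt (x ⬝ᵥ x) * Real.sqrt (z ⬝ᵥ z) := by
    calc z ⬝ᵥ z = x ⬝ᵥ (B *ᵥ z) := h1
    _ ≤ Real.sqrt (x ⬝ᵥ x) * Real.sqrt ((B *ᵥ z) ⬝ᵥ (B *ᵥ z)) :=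
        dotProduct_le_sqrt_mul_sqrt _ _
    _ = Real.sqrt (x ⬝ᵥ x) * Real.sqrt (z ⬝ᵥ z) := by rw [hBz]
  have hzz : Real.sqrt (z ⬝ᵥ z) * Real.sqrt (z ⬝ᵥ z) = z ⬝ᵥ z :=
    Real.mul_self_sqrt (dotProduct_self_nonneg z)
  nlinarith [Real.sqrt_nonneg (z ⬝ᵥ z), Real.sqrt_nonneg (x ⬝ᵥ x),
    Real.sq_sqrt (dotProduct_self_nonneg x), dotProduct_self_nonneg z]

open Matrix in
/-- Trace of `Bᵀ * C` as a sum of column dot products. -/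
lemma trace_transpose_mul {a b : ℕ} (B C : Matrix (Fin a) (Fin b) ℝ) :
    Matrix.trace (Bᵀ * C) = ∑ j, (fun i => B i j) ⬝ᵥ (fun i => C i j) := by
  simp [Matrix.trace, Matrix.diag, Matrix.mul_apply, dotProduct]

/-- Strict nuclear norm lower bound: if moreover some `η` is orthogonal to the columns
of `U` but `ηᵀ M ≠ 0`, then `trace (Uᵀ M V) < ‖M‖_⋆`. -/
theorem trace_lt_nuclearNorm {m n r : ℕ} (M : Matrix (Fin m) (Fin n) ℝ)
    (U : Matrix (Fin m) (Fin r) ℝ) (V : Matrix (Fin n) (Fin r) ℝ)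
    (hU : Uᵀ * U = 1) (hV : Vᵀ * V = 1)
    (η : Fin m → ℝ) (hηU : Matrix.vecMul η U = 0) (hηM : Matrix.vecMul η M ≠ 0) :
    Matrix.trace (Uᵀ * M * V) < nuclearNorm M := by
  classical
  have hA := Matrix.isHermitian_conjTranspose_mul_self M
  set v : Fin n → (Fin n → ℝ) := fun j => ⇑(hA.eigenvectorBasis j) with hvdef
  set P : Matrix (Fin n) (Fin n) ℝ := ↑(hA.eigenvectorUnitary) with hPdef
  have hPapp : ∀ i j, P i j = v j i := fun i j => rfl
  have hPunit : P * star P = 1 :=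
    Matrix.mem_unitaryGroup_iff.mp hA.eigenvectorUnitary.2
  have hPunit' : star P * P = 1 :=
    Matrix.mem_unitaryGroup_iff'.mp hA.eigenvectorUnitary.2
  have hstarP : star P = Pᵀ := Matrix.conjTranspose_eq_transpose_of_trivial P
  -- eigen equation
  have heig : ∀ j, (Mᵀ * M) *ᵥ v j = hA.eigenvalues j • v j := fun j =>
    hA.mulVec_eigenvectorBasis j
  -- orthonormality of the v j
  have hON : ∀ i j, v i ⬝ᵥ v j = if i = j then 1 else 0 := by
    intro i j
    have := orthonormal_iff_ite.mp hA.eigenvectorBasis.orthonormal i j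
    simpa [PiLp.inner_apply, RCLike.inner_apply, dotProduct, hvdef, mul_comm] using this
  -- ‖M v j‖² = eigenvalue j
  have hMv : ∀ j, (M *ᵥ v j) ⬝ᵥ (M *ᵥ v j) = hA.eigenvalues j := by
    intro j
    rw [mulVec_dot_mulVec, heig j, dotProduct_smul, smul_eq_mul,
      hON j j]
    simp
  set W : Matrix (Fin m) (Fin n) ℝ := U * Vᵀ with hWdef
  -- the trace as a sum over the eigenbasis
  have hkey : Matrix.trace (Uᵀ * M * V) = ∑ j, (W *ᵥ v j) ⬝ᵥ (M *ᵥ v j) := by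
    have h1 : Matrix.trace (Uᵀ * M * V) = Matrix.trace (Wᵀ * M) := by
      have e0 : Wᵀ * M = V * (Uᵀ * M) := by
        rw [hWdef, Matrix.transpose_mul, Matrix.transpose_transpose, Matrix.mul_assoc]
      rw [e0]
      exact Matrix.trace_mul_comm (Uᵀ * M) V
    have hPPt : P * Pᵀ = 1 := by rw [← hstarP]; exact hPunit
    have h2 : Matrix.trace (Wᵀ * M) = Matrix.trace ((W * P)ᵀ * (M * P)) := by
      have e1 : (W * P)ᵀ * (M * P) = Pᵀ * (Wᵀ * M * P) := by
        simp only [Matrix.transpose_mul, Matrix.mul_assoc]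
      calc Matrix.trace (Wᵀ * M)
          = Matrix.trace (Wᵀ * M * (P * Pᵀ)) := by rw [hPPt, Matrix.mul_one]
        _ = Matrix.trace ((Wᵀ * M * P) * Pᵀ) := by rw [Matrix.mul_assoc (Wᵀ * M) P Pᵀ]
        _ = Matrix.trace (Pᵀ * (Wᵀ * M * P)) := Matrix.trace_mul_comm _ _
        _ = Matrix.trace ((W * P)ᵀ * (M * P)) := by rw [e1]
    have h3 : ∀ j, (fun i => (W * P) i j) = W *ᵥ v j := by
      intro j
      funext i
      simp [Matrix.mul_apply, Matrix.mulVec, dotProduct, hPapp]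
    have h4 : ∀ j, (fun i => (M * P) i j) = M *ᵥ v j := by
      intro j
      funext i
      simp [Matrix.mul_apply, Matrix.mulVec, dotProduct, hPapp]
    rw [h1, h2, trace_transpose_mul]
    exact Finset.sum_congr rfl fun j _ => by rw [h3 j, h4 j]
  -- per-term bound
  have hterm : ∀ j, (W *ᵥ v j) ⬝ᵥ (M *ᵥ v j) ≤ Real.sqrt (hA.eigenvalues j) := by
    intro j
    have hw : (W *ᵥ v j) ⬝ᵥ (W *ᵥ v j) ≤ 1 := by
      have hsplit : W *ᵥ v j = U *ᵥ (Vᵀ *ᵥ v j) := by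
        rw [hWdef, Matrix.mulVec_mulVec]
      rw [hsplit, mulVec_dot_mulVec, hU, Matrix.one_mulVec]
      have := transpose_mulVec_dot_le V hV (v j)
      rw [hON j j] at this
      simpa using this
    calc (W *ᵥ v j) ⬝ᵥ (M *ᵥ v j)
        ≤ Real.sqrt ((W *ᵥ v j) ⬝ᵥ (W *ᵥ v j)) * Real.sqrt ((M *ᵥ v j) ⬝ᵥ (M *ᵥ v j)) :=
          dotProduct_le_sqrt_mul_sqrt _ _
      _ ≤ 1 * Real.sqrt ((M *ᵥ v j) ⬝ᵥ (M *ᵥ v j)) := by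
          gcongr
          exact Real.sqrt_le_one.mpr (by simpa using hw)
      _ = Real.sqrt (hA.eigenvalues j) := by rw [one_mul, hMv j]
  -- existence of a strict term
  obtain ⟨j₀, hj₀⟩ : ∃ j, η ⬝ᵥ (M *ᵥ v j) ≠ 0 := by
    by_contra h
    push_neg at h
    apply hηM
    have hcol : ∀ j, Matrix.vecMul (Matrix.vecMul η M) P j = 0 := by
      intro j
      have : Matrix.vecMul (Matrix.vecMul η M) P j = (Matrix.vecMul η M) ⬝ᵥ v j := by
        simp [Matrix.vecMul, dotProduct, hPapp]
      rw [this, ← Matrix.dotProduct_mulVec]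
      exact h j
    have hz : Matrix.vecMul (Matrix.vecMul η M) P = 0 := funext hcol
    have : Matrix.vecMul (Matrix.vecMul (Matrix.vecMul η M) P) (star P)
        = Matrix.vecMul η M := by
      rw [Matrix.vecMul_vecMul, hPunit, Matrix.vecMul_one]
    rw [hz] at this
    rw [← this, Matrix.zero_vecMul]
  -- strict bound at j₀
  have hstrict : (W *ᵥ v j₀) ⬝ᵥ (M *ᵥ v j₀) < Real.sqrt (hA.eigenvalues j₀) := by
    set w := W *ᵥ v j₀ with hwdef
    set y := M *ᵥ v j₀ with hydef
    have hηw : η ⬝ᵥ w = 0 := by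
      rw [hwdef, hWdef, ← Matrix.mulVec_mulVec, Matrix.dotProduct_mulVec, hηU,
        zero_dotProduct]
    have hηne : η ≠ 0 := by
      intro h0
      rw [h0] at hj₀
      simp at hj₀
    have hηη : 0 < η ⬝ᵥ η := by
      rcases lt_or_eq_of_le (dotProduct_self_nonneg η) with h | h
      · exact h
      · exact absurd (dotProduct_self_eq_zero.mp h.symm) hηne
    set c : ℝ := (η ⬝ᵥ y) / (η ⬝ᵥ η) with hcdef
    set y' : Fin m → ℝ := y - c • η with hy'def
    have hwy' : w ⬝ᵥ y = w ⬝ᵥ y' := by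
      rw [hy'def, dotProduct_sub, dotProduct_smul, smul_eq_mul,
        dotProduct_comm w η, hηw, mul_zero, sub_zero]
    have hy'y' : y' ⬝ᵥ y' = y ⬝ᵥ y - (η ⬝ᵥ y) ^ 2 / (η ⬝ᵥ η) := by
      rw [hy'def]
      have expand : (y - c • η) ⬝ᵥ (y - c • η)
          = y ⬝ᵥ y - 2 * c * (η ⬝ᵥ y) + c ^ 2 * (η ⬝ᵥ η) := by
        simp only [dotProduct_sub, sub_dotProduct, dotProduct_smul,
          smul_dotProduct, smul_eq_mul]
        rw [dotProduct_comm y η]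
        ring
      rw [expand, hcdef]
      field_simp
      ring
    have hy'lt : y' ⬝ᵥ y' < y ⬝ᵥ y := by
      rw [hy'y']
      have : 0 < (η ⬝ᵥ y) ^ 2 / (η ⬝ᵥ η) := div_pos (by positivity) hηη
      linarith
    have hww : w ⬝ᵥ w ≤ 1 := by
      have hsplit : w = U *ᵥ (Vᵀ *ᵥ v j₀) := by
        rw [hwdef, hWdef, Matrix.mulVec_mulVec]
      rw [hsplit, mulVec_dot_mulVec, hU, Matrix.one_mulVec]
      have := transpose_mulVec_dot_le V hV (v j₀)
      rw [hON j₀ j₀] at this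
      simpa using this
    calc w ⬝ᵥ y = w ⬝ᵥ y' := hwy'
      _ ≤ Real.sqrt (w ⬝ᵥ w) * Real.sqrt (y' ⬝ᵥ y') := dotProduct_le_sqrt_mul_sqrt _ _
      _ ≤ 1 * Real.sqrt (y' ⬝ᵥ y') := by
          gcongr
          exact Real.sqrt_le_one.mpr (by simpa using hww)
      _ = Real.sqrt (y' ⬝ᵥ y') := one_mul _
      _ < Real.sqrt (y ⬝ᵥ y) :=
          Real.sqrt_lt_sqrt (dotProduct_self_nonneg y') hy'lt
      _ = Real.sqrt (hA.eigenvalues j₀) := by rw [hydef, hMv j₀]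
  rw [hkey, nuclearNorm]
  exact Finset.sum_lt_sum (fun j _ => hterm j) ⟨j₀, Finset.mem_univ j₀, hstrict⟩
end

section
/- Let m_train, m_test be positive reals, and define for real variables p1, q1, f1, g1 the quantity S = m_train p1² + m_test f1² + m_train q1² + m_test g1² + 2√(m_train m_test)·|p1 g1 − f1 q1|, subject to constraints p1 ≥ 1, f1 ≥ 1, q1 ≥ 1, g1 ≥ 0. If m_test ≥ m_train, then the minimum of S is (√m_train + √m_test)². If m_test < m_train, the minimum of S is 2(m_train + m_test). -/
open scoped BigOperators

/-- The scalar objective `S` from the nuclear-norm minimization. -/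
noncomputable def Sobj (mtr mte p1 f1 q1 g1 : ℝ) : ℝ :=
  mtr * p1 ^ 2 + mte * f1 ^ 2 + mtr * q1 ^ 2 + mte * g1 ^ 2 +
    2 * Real.sqrt (mtr * mte) * |p1 * g1 - f1 * q1|

set_option maxHeartbeats 1000000 in
/-- Minimization of `S = m_train p1² + m_test f1² + m_train q1² + m_test g1²
  + 2√(m_train m_test)|p1 g1 − f1 q1|` over `p1, f1, q1 ≥ 1`, `g1 ≥ 0`:
the minimum is `(√m_train + √m_test)²` when `m_test ≥ m_train`, and
`2(m_train + m_test)` when `m_test < m_train`. -/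
theorem min_Sobj (mtr mte : ℝ) (hmtr : 0 < mtr) (hmte : 0 < mte) :
    (mtr ≤ mte →
      IsLeast {x : ℝ | ∃ p1 f1 q1 g1 : ℝ, 1 ≤ p1 ∧ 1 ≤ f1 ∧ 1 ≤ q1 ∧ 0 ≤ g1 ∧
          x = Sobj mtr mte p1 f1 q1 g1}
        ((Real.sqrt mtr + Real.sqrt mte) ^ 2)) ∧
    (mte < mtr →
      IsLeast {x : ℝ | ∃ p1 f1 q1 g1 : ℝ, 1 ≤ p1 ∧ 1 ≤ f1 ∧ 1 ≤ q1 ∧ 0 ≤ g1 ∧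
          x = Sobj mtr mte p1 f1 q1 g1}
        (2 * (mtr + mte))) := by
  have ha2 : (Real.sqrt mtr)^2 = mtr := Real.sq_sqrt hmtr.le
  have hb2 : (Real.sqrt mte)^2 = mte := Real.sq_sqrt hmte.le
  set a := Real.sqrt mtr
  set b := Real.sqrt mte
  have hapos : 0 < a := Real.sqrt_pos.mpr hmtr
  have hbpos : 0 < b := Real.sqrt_pos.mpr hmte
  have hK : Real.sqrt (mtr*mte) = a*b := by
    rw [Real.sqrt_mul hmtr.le]
  constructor
  · intro hle
    have hab : a ≤ b := Real.sqrt_le_sqrt hle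
    constructor
    · refine ⟨1, 1, 1, a/b, le_refl 1, le_refl 1, le_refl 1, by positivity, ?_⟩
      have habs : |1*(a/b) - 1*1| = 1 - a/b := by
        rw [abs_of_nonpos (by nlinarith [div_le_one_of_le₀ hab hbpos.le] : 1*(a/b) - 1*1 ≤ 0)]
        ring
      simp only [Sobj, hK, habs]
      rw [← ha2, ← hb2]
      field_simp
      ring
    · rintro x ⟨p, f, q, g, hp, hf, hq, hg, rfl⟩
      simp only [Sobj, hK]
      have habs : f*q - p*g ≤ |p*g - f*q| := by
        rw [abs_sub_comm]; exact le_abs_self _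
      nlinarith [sq_nonneg (a*p - b*g), mul_pos hapos hbpos,
        mul_nonneg (add_nonneg (mul_nonneg hapos.le (sub_nonneg.2 hq))
          (mul_nonneg hbpos.le (sub_nonneg.2 hf)))
          (by positivity : (0:ℝ) ≤ a*q + b*f + a + b),
        mul_nonneg (mul_nonneg hapos.le hbpos.le) (sub_nonneg.2 habs)]
  · intro hlt
    have hab : b ≤ a := Real.sqrt_le_sqrt hlt.le
    constructor
    · refine ⟨1, 1, 1, 1, le_refl 1, le_refl 1, le_refl 1, zero_le_one, ?_⟩
      simp [Sobj]
      ring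
    · rintro x ⟨p, f, q, g, hp, hf, hq, hg, rfl⟩
      simp only [Sobj, hK]
      have hfq : (1:ℝ) ≤ f*q := one_le_mul_of_one_le_of_one_le hf hq
      have key1 : mtr + mte ≤ mtr*q^2 + mte*f^2 := by
        nlinarith [mul_nonneg hmtr.le (by nlinarith : (0:ℝ) ≤ q^2-1),
          mul_nonneg hmte.le (by nlinarith : (0:ℝ) ≤ f^2-1)]
      by_cases h : 1 ≤ p*g
      · have hp2 : (0:ℝ) ≤ p^2 - 1 := by nlinarith
        have hmp : (0:ℝ) ≤ mtr * p^2 - mte := by nlinarith [mul_nonneg hmtr.le hp2]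
        have hX : 0 ≤ (mtr*p^2 + mte*g^2 - mtr - mte) * p^2 := by
          nlinarith [mul_nonneg hp2 hmp, mul_nonneg hmte.le
            (by nlinarith : (0:ℝ) ≤ (p*g)^2 - 1)]
        have hp2pos : (0:ℝ) < p^2 := by positivity
        have key2 : mtr + mte ≤ mtr*p^2 + mte*g^2 := by nlinarith [hX, hp2pos]
        have h5 : (0:ℝ) ≤ 2*(a*b)*|p*g - f*q| := by positivity
        linarith [key1, key2, h5]
      · push_neg at h
        have hg1 : g ≤ 1 := by nlinarith [mul_nonneg hg (sub_nonneg.2 hp)]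
        have habs : f*q - p*g ≤ |p*g - f*q| := by
          rw [abs_sub_comm]; exact le_abs_self _
        have h3 : a - b ≤ a*p - b*g := by
          nlinarith [mul_nonneg hapos.le (sub_nonneg.2 hp),
            mul_nonneg hbpos.le (sub_nonneg.2 hg1)]
        have h4 : (a-b)^2 ≤ (a*p - b*g)^2 := pow_le_pow_left₀ (sub_nonneg.2 hab) h3 2
        have hprod : (0:ℝ) ≤ 2*(a*b)*(f*q - 1) := by
          have : (0:ℝ) ≤ f*q - 1 := by linarith
          positivity
        have key2 : mtr + mte ≤ mtr*p^2 + mte*g^2 + 2*(a*b)*(f*q - p*g) := by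
          have e : mtr*p^2 + mte*g^2 + 2*(a*b)*(f*q - p*g) - (mtr + mte)
              = ((a*p - b*g)^2 - (a-b)^2) + 2*(a*b)*(f*q - 1) := by
            rw [← ha2, ← hb2]; ring
          linarith [h4, hprod]
        have h5 : 2*(a*b)*(f*q - p*g) ≤ 2*(a*b)*|p*g - f*q| :=
          mul_le_mul_of_nonneg_left habs (by positivity)
        linarith [key1, key2, h5]
end
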